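/- Let k be a field, d ≥ 1, and φ₁,...,φ_d forms of degree d over k (in n₁,...,n_d variables respectively). Over the Laurent series field K = k((t)), the form φ₁(X₁) + t·φ₂(X₂) + ... + t^{d-1}·φ_d(X_d) is anisotropic over K if and only if each φ_i is anisotropic over k. -/

import Mathlib

set_option synthInstance.maxHeartbeats 1000000
set_option maxHeartbeats 1000000

open MvPolynomial

theorem eval_mul_of_isHomogeneous {R : Type*} [CommSemiring R] {σ : Type*}
    {φ : MvPolynomial σ R} {m : ℕ} (h : φ.IsHomogeneous m) (c : R) (v : σ → R) :
    eval (fun j => c * v j) φ = c ^ m * eval v φ := by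
  rw [eval_eq, eval_eq, Finset.mul_sum]
  refine Finset.sum_congr rfl fun e he => ?_
  have hdeg := h (mem_support_iff.mp he)
  simp only [Finsupp.weight_apply, Pi.one_apply, smul_eq_mul, mul_one, Finsupp.sum] at hdeg
  simp_rw [mul_pow]
  rw [Finset.prod_mul_distrib, Finset.prod_pow_eq_pow_sum, hdeg]
  ring

theorem eval_zero_of_isHomogeneous {R : Type*} [CommRing R] {σ : Type*}
    {φ : MvPolynomial σ R} {m : ℕ} (h : φ.IsHomogeneous m) (hm : 1 ≤ m) :
    eval (0 : σ → R) φ = 0 := by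
  have := eval_mul_of_isHomogeneous h 0 0
  simpa [zero_pow (show m ≠ 0 by omega)] using this

/-- A form (polynomial) is anisotropic if its only zero is the trivial one. -/
def Anisotropic {k : Type*} [CommSemiring k] {σ : Type*} (φ : MvPolynomial σ k) : Prop :=
  ∀ x : σ → k, eval x φ = 0 → x = 0

theorem stmt_11 {k : Type*} [Field k] {d : ℕ} (hd : 1 ≤ d) (n : Fin d → ℕ)
    (φ : ∀ i : Fin d, MvPolynomial (Fin (n i)) k)
    (hφ : ∀ i, (φ i).IsHomogeneous d) :
    Anisotropic (∑ i : Fin d, C ((HahnSeries.single (1 : ℤ) (1 : k)) ^ (i : ℕ)) *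
        rename (fun j => (⟨i, j⟩ : Σ i : Fin d, Fin (n i)))
          (map (HahnSeries.C : k →+* LaurentSeries k) (φ i)) :
      MvPolynomial (Σ i : Fin d, Fin (n i)) (LaurentSeries k)) ↔
    ∀ i, Anisotropic (φ i) := by
  constructor
  · intro hP
    intro i x hx
    classical
    set X : (Σ i : Fin d, Fin (n i)) → LaurentSeries k :=
      fun s => if h : s.1 = i then HahnSeries.C (x (Fin.cast (by rw [h]) s.2)) else 0 with hXdef
    have hXP : eval X (∑ i : Fin d, C ((HahnSeries.single (1 : ℤ) (1 : k)) ^ (i : ℕ)) *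
          rename (fun j => (⟨i, j⟩ : Σ i : Fin d, Fin (n i)))
            (map (HahnSeries.C : k →+* LaurentSeries k) (φ i))) = 0 := by
      rw [map_sum (eval X) _ Finset.univ]
      refine Finset.sum_eq_zero fun i' _ => ?_
      rw [eval_mul, eval_C, eval_rename]
      by_cases h : i' = i
      · subst h
        have hcomp : (X ∘ fun j => (⟨i', j⟩ : Σ i : Fin d, Fin (n i))) =
            fun j => HahnSeries.C (x j) := by
          funext j; simp [hXdef]
        have key := (eval₂_comp_left (HahnSeries.C : k →+* LaurentSeries k)
          (RingHom.id k) x (φ i')).symm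
        simp only [RingHom.comp_id, eval₂_id] at key
        rw [hcomp, eval_map]
        rw [show (fun j => HahnSeries.C (x j)) = (HahnSeries.C : k →+* LaurentSeries k) ∘ x from rfl,
          key, hx, map_zero, mul_zero]
      · have hcomp : (X ∘ fun j => (⟨i', j⟩ : Σ i : Fin d, Fin (n i))) = 0 := by
          funext j; simp [hXdef, h]
        rw [hcomp, eval_zero_of_isHomogeneous ((hφ i').map _) hd, mul_zero]
    have hX0 := hP X hXP
    funext j
    have h0 : X ⟨i, j⟩ = 0 := by rw [hX0]; rfl
    simp only [hXdef, dif_pos rfl] at h0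
    rw [show Fin.cast (by rw [show i = i from rfl]) j = j from rfl] at h0
    exact (HahnSeries.single_eq_zero_iff (a := (0:ℤ))).mp h0
  · intro h
    classical
    intro x hx
    by_contra hne
    -- general expansion of eval of the big polynomial
    have expand : ∀ z : (Σ i : Fin d, Fin (n i)) → LaurentSeries k,
        eval z (∑ i : Fin d, C ((HahnSeries.single (1 : ℤ) (1 : k)) ^ (i : ℕ)) *
          rename (fun j => (⟨i, j⟩ : Σ i : Fin d, Fin (n i)))
            (map (HahnSeries.C : k →+* LaurentSeries k) (φ i))) =
        ∑ i : Fin d, (HahnSeries.single (1 : ℤ) (1 : k)) ^ (i : ℕ) *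
          eval (fun j => z ⟨i, j⟩) (map (HahnSeries.C : k →+* LaurentSeries k) (φ i)) := by
      intro z
      rw [map_sum (eval z) _ Finset.univ]
      exact Finset.sum_congr rfl fun i _ => by rw [eval_mul, eval_C, eval_rename]; rfl
    -- choose a coordinate of minimal order among the nonzero ones
    obtain ⟨s₁, hs₁⟩ := Function.ne_iff.mp hne
    obtain ⟨s₀, hs₀mem, hmin⟩ := Finset.exists_min_image
      (Finset.univ.filter fun s => x s ≠ 0) (fun s => (x s).order) ⟨s₁, by simpa using hs₁⟩
    have hxs₀ : x s₀ ≠ 0 := by simpa using hs₀mem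
    set N : ℤ := (x s₀).order with hN
    have hmin' : ∀ s, x s ≠ 0 → N ≤ (x s).order := fun s hs => hmin s (by simpa using hs)
    set c : LaurentSeries k := HahnSeries.single (-N) 1 with hc
    -- power series lifts of the rescaled coordinates
    set y : (Σ i : Fin d, Fin (n i)) → PowerSeries k := fun s =>
      if x s = 0 then 0 else
        PowerSeries.X ^ ((x s).order - N).toNat * (x s).powerSeriesPart with hydef
    have hy : ∀ s, HahnSeries.ofPowerSeries ℤ k (y s) = c * x s := by
      intro s
      by_cases hs : x s = 0
      · simp [hydef, hs]
      · rw [hydef]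
        simp only [if_neg hs]
        rw [map_mul, HahnSeries.ofPowerSeries_X_pow,
          LaurentSeries.ofPowerSeries_powerSeriesPart, ← mul_assoc,
          HahnSeries.single_mul_single, one_mul]
        have h1 : (0:ℤ) ≤ (x s).order - N := sub_nonneg.mpr (hmin' s hs)
        have h2 := Int.toNat_of_nonneg h1
        rw [h2, hc, show (x s).order - N + -(x s).order = -N from by ring]
    -- the lifted coordinate at s₀ has nonzero constant coefficient
    have hcc0 : PowerSeries.constantCoeff (R := k) (y s₀) ≠ 0 := by
      rw [hydef]
      simp only [if_neg hxs₀, ← hN, sub_self, Int.toNat_zero, pow_zero, one_mul]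
      have hpp := (x s₀).powerSeriesPart_coeff 0
      rw [Nat.cast_zero, add_zero] at hpp
      rw [← PowerSeries.coeff_zero_eq_constantCoeff_apply, hpp]
      exact HahnSeries.coeff_order_eq_zero.not.mpr hxs₀
    -- the power series values of the forms
    set b : Fin d → PowerSeries k := fun i =>
      eval (fun j => y ⟨i, j⟩) (map (PowerSeries.C (R := k)) (φ i)) with hb
    have hkey : ∀ i : Fin d, HahnSeries.ofPowerSeries ℤ k (b i) =
        eval (fun j => c * x ⟨i, j⟩) (map (HahnSeries.C : k →+* LaurentSeries k) (φ i)) := by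
      intro i
      have hCcomp : (HahnSeries.ofPowerSeries ℤ k).comp (PowerSeries.C (R := k)) =
          (HahnSeries.C : k →+* LaurentSeries k) := by
        exact RingHom.ext fun r => HahnSeries.ofPowerSeries_C r
      simp only [hb]
      rw [eval_map, eval_map,
        eval₂_comp_left (HahnSeries.ofPowerSeries ℤ k) (PowerSeries.C (R := k)) _ (φ i), hCcomp]
      congr 1
      funext j
      exact (hy ⟨i, j⟩).trans rfl
    -- the equation in the power series ring
    have hzero : ∑ i : Fin d, PowerSeries.X ^ (i : ℕ) * b i = 0 := by
      apply HahnSeries.ofPowerSeries_injective (Γ := ℤ) (R := k)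
      rw [map_sum, map_zero]
      have : ∑ i : Fin d, HahnSeries.ofPowerSeries ℤ k (PowerSeries.X ^ (i:ℕ) * b i) =
          eval (fun s => c * x s) (∑ i : Fin d, C ((HahnSeries.single (1 : ℤ) (1 : k)) ^ (i : ℕ)) *
            rename (fun j => (⟨i, j⟩ : Σ i : Fin d, Fin (n i)))
              (map (HahnSeries.C : k →+* LaurentSeries k) (φ i))) := by
        rw [expand]
        refine Finset.sum_congr rfl fun i _ => ?_
        rw [map_mul, map_pow, HahnSeries.ofPowerSeries_X, hkey i]
      rw [this, expand]
      have : ∀ i : Fin d, eval (fun j => ((fun s => c * x s) ⟨i, j⟩))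
          (map (HahnSeries.C : k →+* LaurentSeries k) (φ i)) =
          c ^ d * eval (fun j => x ⟨i, j⟩) (map (HahnSeries.C : k →+* LaurentSeries k) (φ i)) :=
        fun i => eval_mul_of_isHomogeneous ((hφ i).map _) c _
      simp_rw [this]
      have : ∑ i : Fin d, (HahnSeries.single (1:ℤ) (1:k)) ^ (i:ℕ) *
          (c ^ d * eval (fun j => x ⟨i, j⟩) (map (HahnSeries.C : k →+* LaurentSeries k) (φ i))) =
          c ^ d * ∑ i : Fin d, (HahnSeries.single (1:ℤ) (1:k)) ^ (i:ℕ) *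
            eval (fun j => x ⟨i, j⟩) (map (HahnSeries.C : k →+* LaurentSeries k) (φ i)) := by
        rw [Finset.mul_sum]; exact Finset.sum_congr rfl fun i _ => by ring
      rw [this, ← expand, hx, mul_zero]
    -- if a block reduces to zero, its value is divisible by X^d
    have hXd : ∀ i : Fin d, (∀ j, PowerSeries.constantCoeff (R := k) (y ⟨i, j⟩) = 0) →
        PowerSeries.X ^ d ∣ b i := by
      intro i hiy
      have hdvd : ∀ j, PowerSeries.X ∣ y ⟨i, j⟩ := fun j => PowerSeries.X_dvd_iff.mpr (hiy j)
      choose z hz using hdvd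
      refine ⟨eval z (map (PowerSeries.C (R := k)) (φ i)), ?_⟩
      simp only [hb]
      rw [show (fun j => y (⟨i, j⟩ : Σ i : Fin d, Fin (n i))) =
          fun j => PowerSeries.X * z j from funext hz]
      exact eval_mul_of_isHomogeneous ((hφ i).map _) _ _
    -- main induction: all blocks reduce to zero
    have main : ∀ m : ℕ, ∀ i : Fin d, (i : ℕ) = m →
        ∀ j, PowerSeries.constantCoeff (R := k) (y ⟨i, j⟩) = 0 := by
      intro m
      induction m using Nat.strong_induction_on with
      | _ m IH =>
        intro i him j
        have hbi : PowerSeries.constantCoeff (R := k) (b i) = 0 := by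
          have hcm := congrArg (PowerSeries.coeff (R := k) m) hzero
          rw [map_sum, map_zero] at hcm
          rw [Finset.sum_eq_single i (fun i' _ hne => ?_) (fun habs => absurd (Finset.mem_univ i) habs)] at hcm
          · rw [PowerSeries.coeff_X_pow_mul', him, if_pos le_rfl, Nat.sub_self,
              PowerSeries.coeff_zero_eq_constantCoeff] at hcm
            exact hcm
          · have hvne : (i' : ℕ) ≠ m := fun hv => hne (Fin.ext (by rw [hv, ← him]))
            rcases lt_or_gt_of_ne hvne with hlt | hgt
            · have hdv : PowerSeries.X ^ d ∣ PowerSeries.X ^ (i' : ℕ) * b i' :=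
                Dvd.dvd.mul_left (hXd i' (IH (i' : ℕ) hlt i' rfl)) _
              exact PowerSeries.X_pow_dvd_iff.mp hdv m (him ▸ i.isLt)
            · have hdv : PowerSeries.X ^ (i' : ℕ) ∣ PowerSeries.X ^ (i' : ℕ) * b i' :=
                dvd_mul_right _ _
              exact PowerSeries.X_pow_dvd_iff.mp hdv m hgt
        -- reduce mod X: the form vanishes on the reductions
        have hcomp : (PowerSeries.constantCoeff (R := k)).comp (PowerSeries.C (R := k)) = RingHom.id k := by
          ext r; simp
        have heval : eval (fun j => PowerSeries.constantCoeff (R := k) (y ⟨i, j⟩)) (φ i) = 0 := by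
          have h2 := eval₂_comp_left (PowerSeries.constantCoeff (R := k)) (PowerSeries.C (R := k))
            (fun j => y ⟨i, j⟩) (φ i)
          rw [hcomp, eval₂_id] at h2
          calc eval (fun j => PowerSeries.constantCoeff (R := k) (y ⟨i, j⟩)) (φ i)
              = eval (⇑(PowerSeries.constantCoeff (R := k)) ∘ fun j => y ⟨i, j⟩) (φ i) := rfl
            _ = PowerSeries.constantCoeff (R := k) (eval₂ (PowerSeries.C (R := k)) (fun j => y ⟨i, j⟩) (φ i)) :=
                h2.symm
            _ = PowerSeries.constantCoeff (R := k) (b i) := by simp only [hb, eval_map]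
            _ = 0 := hbi
        have := h i _ heval
        exact congrFun this j
    exact hcc0 (by have := main (s₀.1 : ℕ) s₀.1 rfl s₀.2; rwa [Sigma.eta] at this)
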